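/- arXiv:1407.1708 — 3 statements merged into one kernel-verified Lean document; each statement's English description precedes it below -/
import Mathlib

section
/- Let B : X → Y' be bounded linear between Hilbert spaces, with ⟨Bw, v⟩ =: b(w,v), satisfying the inf-sup condition with constant β(μ) > 0: for all w ∈ X, sup_{v∈Y} b(w,v)/‖v‖_Y ≥ β‖w‖_X. Let X_N ⊂ X be a finite-dimensional subspace and define the test space Y_N := R_Y' B(X_N), i.e., Y_N = { y ∈ Y : (y, z)_Y = b(w, z) ∀ z ∈ Y, for some w ∈ X_N }. Then inf_{w∈X_N} sup_{v∈Y_N} b(w,v)/(‖w‖_X ‖v‖_Y) ≥ β, i.e., the supremizer test space is inf-sup stable with the same constant β, independently of N. -/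
/-- the supremizer test space Y_N = R_Y' B(X_N) is inf-sup stable
with the same constant β, independently of N. -/
theorem stmt_8
    {X Y : Type*} [NormedAddCommGroup X] [InnerProductSpace ℝ X] [CompleteSpace X]
    [NormedAddCommGroup Y] [InnerProductSpace ℝ Y] [CompleteSpace Y]
    (B : X →L[ℝ] StrongDual ℝ Y)
    (β : ℝ) (hβ : 0 < β)
    (hinfsup : ∀ w, β * ‖w‖ ≤ ‖B w‖)
    (XN : Submodule ℝ X) [FiniteDimensional ℝ XN]
    (YN : Set Y)
    (hYN : YN = {y : Y | ∃ w ∈ XN, ∀ z : Y, (inner ℝ y z : ℝ) = B w z}) :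
    ∀ w ∈ XN, β * ‖w‖ ≤ ⨆ v : YN, B w (v : Y) / ‖(v : Y)‖ := by
  intro w hw
  -- the Riesz representer of B w
  set yw : Y := (InnerProductSpace.toDual ℝ Y).symm (B w) with hyw
  have hrep : ∀ z : Y, (inner ℝ yw z : ℝ) = B w z := fun z => by
    simp [hyw, InnerProductSpace.toDual_symm_apply]
  have hmem : yw ∈ YN := by
    rw [hYN]; exact ⟨w, hw, hrep⟩
  have hnorm : ‖yw‖ = ‖B w‖ := by
    simp [hyw]
  -- boundedness of the sup
  have hbdd : BddAbove (Set.range fun v : YN => B w (v : Y) / ‖(v : Y)‖) := by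
    refine ⟨‖B w‖, ?_⟩
    rintro x ⟨v, rfl⟩
    rcases eq_or_ne ‖(v : Y)‖ 0 with h | h
    · simp [h]
    · rw [div_le_iff₀ (lt_of_le_of_ne (norm_nonneg _) (Ne.symm h))]
      exact le_trans (le_abs_self _) ((B w).le_opNorm _)
  have hle : B w yw / ‖yw‖ ≤ ⨆ v : YN, B w (v : Y) / ‖(v : Y)‖ :=
    le_ciSup hbdd (⟨yw, hmem⟩ : YN)
  refine le_trans ?_ hle
  have hBy : B w yw = ‖yw‖ ^ 2 := by
    rw [← hrep yw]; exact real_inner_self_eq_norm_sq yw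
  rcases eq_or_ne ‖yw‖ 0 with h | h
  · have hw0 : ‖B w‖ = 0 := by rw [← hnorm, h]
    have : β * ‖w‖ ≤ 0 := le_trans (hinfsup w) (le_of_eq hw0)
    simpa [hBy, h] using this
  · have hpos : (0:ℝ) < ‖yw‖ := lt_of_le_of_ne (norm_nonneg _) (Ne.symm h)
    rw [hBy, sq, mul_div_assoc, div_self h, mul_one]
    rw [hnorm]
    exact hinfsup w
end

section
/- Let B : X → Y' be bounded (constant γ) and bounded below (β‖u‖ ≤ ‖Bu‖_{Y'}) and boundedly invertible, u the solution of Bu = f, X_h ⊂ X finite-dimensional, and ū_h the Galerkin solution of the normal equations (B ū_h, B w_h)_{Y'} = (f, B w_h)_{Y'} ∀ w_h ∈ X_h. Let A := B⁺B and r_a(w) := B⁺f − Aw ∈ X'. Then ‖r_a(ū_h)‖_{X'} ≤ (γ/β)·inf_{w_h ∈ X_h} ‖r_a(w_h)‖_{X'}. -/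
private lemma aux_norm_le {E : Type*} [NormedAddCommGroup E] [InnerProductSpace ℝ E]
    (a b : E) (h : (inner ℝ a b : ℝ) = 0) : ‖a‖ ≤ ‖a + b‖ := by
  have hpyth : ‖a + b‖ * ‖a + b‖ = ‖a‖ * ‖a‖ + ‖b‖ * ‖b‖ :=
    norm_add_sq_eq_norm_sq_add_norm_sq_real h
  nlinarith [norm_nonneg a, norm_nonneg (a + b), mul_self_nonneg ‖b‖]

/-- ‖r_a(ū_h)‖_{X'} ≤ (γ/β)·inf_{w_h∈X_h}‖r_a(w_h)‖_{X'}, where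
r_a(w) = B⁺f − B⁺Bw, i.e. ⟨r_a(w), x⟩ = (Bx, f − Bw)_{Y'}, and its X'-norm is
sup_x ⟨r_a(w), x⟩/‖x‖. -/
theorem stmt_16
    {X Y : Type*} [NormedAddCommGroup X] [InnerProductSpace ℝ X] [CompleteSpace X]
    [NormedAddCommGroup Y] [InnerProductSpace ℝ Y] [CompleteSpace Y]
    (B : X →L[ℝ] StrongDual ℝ Y)
    (hB : Function.Bijective B)
    (γ β : ℝ) (hβ : 0 < β)
    (hγ : ∀ v, ‖B v‖ ≤ γ * ‖v‖)
    (hβB : ∀ v, β * ‖v‖ ≤ ‖B v‖)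
    (f : StrongDual ℝ Y) (u : X) (hu : B u = f)
    (Xh : Submodule ℝ X) [FiniteDimensional ℝ Xh]
    (uh : X) (huh : uh ∈ Xh)
    (hNE : ∀ wh ∈ Xh,
      (inner ℝ ((InnerProductSpace.toDual ℝ Y).symm (B uh))
        ((InnerProductSpace.toDual ℝ Y).symm (B wh)) : ℝ) =
      (inner ℝ ((InnerProductSpace.toDual ℝ Y).symm f)
        ((InnerProductSpace.toDual ℝ Y).symm (B wh)) : ℝ))
    (raNorm : X → ℝ)
    (hra : ∀ w : X, raNorm w = ⨆ x : X,
      (inner ℝ ((InnerProductSpace.toDual ℝ Y).symm (B x))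
        ((InnerProductSpace.toDual ℝ Y).symm (f - B w)) : ℝ) / ‖x‖) :
    raNorm uh ≤ (γ / β) * ⨅ wh : Xh, raNorm (wh : X) := by
  set J : StrongDual ℝ Y ≃ₗᵢ[ℝ] Y := (InnerProductSpace.toDual ℝ Y).symm with hJ
  -- trivial case
  rcases subsingleton_or_nontrivial X with hX | hX
  · have hz : ∀ w : X, raNorm w = 0 := by
      intro w
      rw [hra w]
      have : ∀ x : X, (inner ℝ (J (B x)) (J (f - B w)) : ℝ) / ‖x‖ = 0 := by
        intro x
        have hx0 : x = 0 := Subsingleton.elim x 0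
        simp [hx0]
      calc (⨆ x : X, (inner ℝ (J (B x)) (J (f - B w)) : ℝ) / ‖x‖)
          = ⨆ _ : X, (0:ℝ) := by congr 1; exact funext this
        _ = 0 := ciSup_const
    have hI : (⨅ wh : Xh, raNorm (wh : X)) = 0 := by
      have : ∀ wh : Xh, raNorm (wh : X) = 0 := fun wh => hz _
      simp [this]
    rw [hz uh, hI, mul_zero]
  -- nontrivial case
  obtain ⟨v, hv⟩ := exists_ne (0 : X)
  have hβγ : β ≤ γ := by
    have h1 := (hβB v).trans (hγ v)
    have hvn : (0:ℝ) < ‖v‖ := norm_pos_iff.mpr hv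
    exact le_of_mul_le_mul_right (by linarith) hvn
  have hγ0 : 0 ≤ γ := le_of_lt (lt_of_lt_of_le hβ hβγ)
  -- each term bound
  have hterm : ∀ w x : X, (inner ℝ (J (B x)) (J (f - B w)) : ℝ) / ‖x‖ ≤ γ * ‖f - B w‖ := by
    intro w x
    rcases eq_or_ne x 0 with rfl | hx
    · simp [mul_nonneg hγ0 (norm_nonneg _)]
    · rw [div_le_iff₀ (norm_pos_iff.mpr hx)]
      calc (inner ℝ (J (B x)) (J (f - B w)) : ℝ)
          ≤ ‖J (B x)‖ * ‖J (f - B w)‖ := real_inner_le_norm _ _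
        _ = ‖B x‖ * ‖f - B w‖ := by rw [J.norm_map, J.norm_map]
        _ ≤ (γ * ‖x‖) * ‖f - B w‖ :=
            mul_le_mul_of_nonneg_right (hγ x) (norm_nonneg _)
        _ = γ * ‖f - B w‖ * ‖x‖ := by ring
  have hbdd : ∀ w : X, BddAbove (Set.range fun x : X =>
      (inner ℝ (J (B x)) (J (f - B w)) : ℝ) / ‖x‖) := by
    intro w
    exact ⟨γ * ‖f - B w‖, by rintro _ ⟨x, rfl⟩; exact hterm w x⟩
  -- upper bound on raNorm
  have hub : ∀ w : X, raNorm w ≤ γ * ‖f - B w‖ := by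
    intro w
    rw [hra w]
    exact ciSup_le (hterm w)
  -- lower bound on raNorm
  have hlb : ∀ w : X, β * ‖f - B w‖ ≤ raNorm w := by
    intro w
    obtain ⟨x, hx⟩ := hB.surjective (f - B w)
    rcases eq_or_ne (f - B w) 0 with h0 | h0
    · rw [h0, norm_zero, mul_zero, hra w]
      have := le_ciSup (hbdd w) (0 : X)
      simpa using this
    · have hx0 : x ≠ 0 := by
        rintro rfl
        rw [map_zero] at hx
        exact h0 hx.symm
      have hxn : (0:ℝ) < ‖x‖ := norm_pos_iff.mpr hx0
      have hfw : (0:ℝ) < ‖f - B w‖ := norm_pos_iff.mpr h0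
      have hle : ‖x‖ ≤ ‖f - B w‖ / β := by
        rw [le_div_iff₀ hβ]
        calc ‖x‖ * β = β * ‖x‖ := by ring
          _ ≤ ‖B x‖ := hβB x
          _ = ‖f - B w‖ := by rw [hx]
      have hval : (inner ℝ (J (B x)) (J (f - B w)) : ℝ) = ‖f - B w‖ ^ 2 := by
        rw [hx]
        rw [real_inner_self_eq_norm_sq, J.norm_map]
      have : β * ‖f - B w‖ ≤ (inner ℝ (J (B x)) (J (f - B w)) : ℝ) / ‖x‖ := by
        rw [hval, le_div_iff₀ hxn]
        calc β * ‖f - B w‖ * ‖x‖ ≤ β * ‖f - B w‖ * (‖f - B w‖ / β) := by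
              apply mul_le_mul_of_nonneg_left hle
              positivity
          _ = ‖f - B w‖ ^ 2 := by field_simp
      rw [hra w]
      exact this.trans (le_ciSup (hbdd w) x)
  -- Galerkin orthogonality / quasi-optimality in Y'
  have hgal : ∀ wh : Xh, ‖f - B uh‖ ≤ ‖f - B (wh : X)‖ := by
    intro wh
    set a : Y := J (f - B uh) with ha
    set b : Y := J (B uh - B (wh : X)) with hb
    have horth : (inner ℝ a b : ℝ) = 0 := by
      have hmem : uh - (wh : X) ∈ Xh := sub_mem huh wh.2
      have h := hNE (uh - (wh : X)) hmem
      have hBsub : B (uh - (wh : X)) = B uh - B (wh : X) := by rw [map_sub]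
      rw [hBsub] at h
      have : (inner ℝ (J (B uh) - J f) b : ℝ) = 0 := by
        rw [inner_sub_left, h, sub_self]
      have h2 : a = -(J (B uh) - J f) := by
        rw [ha, ← J.map_sub, show f - B uh = -(B uh - f) by abel]
        exact map_neg J _
      rw [h2, inner_neg_left, this, neg_zero]
    have hsum : J (f - B (wh : X)) = a + b := by
      rw [ha, hb, ← J.map_add]
      congr 1
      abel
    calc ‖f - B uh‖ = ‖a‖ := by rw [ha, J.norm_map]
      _ ≤ ‖a + b‖ := aux_norm_le a b horth
      _ = ‖f - B (wh : X)‖ := by rw [← hsum, J.norm_map]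
  -- combine
  have hc : (0:ℝ) < γ / β := div_pos (lt_of_lt_of_le hβ hβγ) hβ
  rw [← div_le_iff₀' hc]
  apply le_ciInf
  intro wh
  rw [div_le_iff₀' hc]
  calc raNorm uh ≤ γ * ‖f - B uh‖ := hub uh
    _ ≤ γ * ‖f - B (wh : X)‖ := mul_le_mul_of_nonneg_left (hgal wh) hγ0
    _ = (γ / β) * (β * ‖f - B (wh : X)‖) := by field_simp
    _ ≤ (γ / β) * raNorm (wh : X) := mul_le_mul_of_nonneg_left (hlb _) (le_of_lt hc)
end

section
/- Let a be symmetric, coercive (constant α) and continuous (constant γ) on a Hilbert space X, u the solution of Au = f, X_h ⊂ X a subspace, and u_h the Galerkin solution on X_h. Then the residual satisfies ‖f − A u_h‖_{X'} ≤ √(γ/α)·inf_{w_h ∈ X_h} ‖f − A w_h‖_{X'}. -/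
set_option maxHeartbeats 1000000 in
/-- Galerkin residual quasi-minimization in the elliptic case:
‖f - A u_h‖_{X'} ≤ √(γ/α)·inf_{w_h∈X_h}‖f - A w_h‖_{X'}. -/
theorem stmt_17
    {X : Type*} [NormedAddCommGroup X] [InnerProductSpace ℝ X] [CompleteSpace X]
    (a : X →L[ℝ] X →L[ℝ] ℝ) (f : StrongDual ℝ X)
    (γ α : ℝ) (hα : 0 < α)
    (hsym : ∀ v w, a v w = a w v)
    (hcont : ∀ v w, a v w ≤ γ * ‖v‖ * ‖w‖)
    (hcoer : ∀ w, α * ‖w‖ ^ 2 ≤ a w w)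
    (u : X) (hu : ∀ v, a u v = f v)
    (Xh : Submodule ℝ X) [FiniteDimensional ℝ Xh]
    (uh : X) (huh : uh ∈ Xh)
    (hGal : ∀ v ∈ Xh, a uh v = f v) :
    ‖f - a uh‖ ≤ Real.sqrt (γ / α) * ⨅ wh : Xh, ‖f - a (wh : X)‖ := by
  have hf : f = a u := by
    ext v; exact (hu v).symm
  have hnn : ∀ v : X, 0 ≤ a v v := fun v => le_trans (by positivity) (hcoer v)
  by_cases htriv : ∀ v : X, v = 0
  · have h0 : f - a uh = 0 := by
      ext v; rw [htriv v]; simp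
    rw [h0, norm_zero]
    exact mul_nonneg (Real.sqrt_nonneg _)
      (Real.iInf_nonneg fun _ => norm_nonneg _)
  push_neg at htriv
  obtain ⟨v0, hv0⟩ := htriv
  have hγα : α ≤ γ := by
    have h1 := hcoer v0
    have h2 := hcont v0 v0
    have h3 : 0 < ‖v0‖ := norm_pos_iff.mpr hv0
    have h4 : ‖v0‖ ^ 2 = ‖v0‖ * ‖v0‖ := pow_two _
    nlinarith [mul_pos h3 h3]
  have hγ : 0 < γ := lt_of_lt_of_le hα hγα
  -- Cauchy-Schwarz for a
  have hCS : ∀ v w : X, (a v w) ^ 2 ≤ a v v * a w w := by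
    intro v w
    rcases eq_or_ne w 0 with h | h
    · simp [h]
    · have hw : 0 < ‖w‖ := norm_pos_iff.mpr h
      have hww : 0 < a w w := lt_of_lt_of_le (by positivity) (hcoer w)
      have key : 0 ≤ a ((a w w) • v - (a v w) • w) ((a w w) • v - (a v w) • w) := hnn _
      simp only [map_sub, map_smul, ContinuousLinearMap.sub_apply,
        ContinuousLinearMap.smul_apply, smul_eq_mul] at key
      rw [hsym w v] at key
      nlinarith [key, hww]
  -- Galerkin orthogonality
  have horth : ∀ v ∈ Xh, a (u - uh) v = 0 := by
    intro v hv
    have : a (u - uh) v = a u v - a uh v := by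
      simp [map_sub]
    rw [this, hu v, hGal v hv]; ring
  -- energy minimization
  have hmin : ∀ wh : Xh, a (u - uh) (u - uh) ≤ a (u - (wh : X)) (u - (wh : X)) := by
    intro wh
    have hd : uh - (wh : X) ∈ Xh := Submodule.sub_mem _ huh wh.2
    have hsplit : u - (wh : X) = (u - uh) + (uh - (wh : X)) := by abel
    rw [hsplit]
    have hexp : a ((u - uh) + (uh - (wh : X))) ((u - uh) + (uh - (wh : X)))
        = a (u - uh) (u - uh) + a (u - uh) (uh - (wh : X))
          + a (uh - (wh : X)) (u - uh) + a (uh - (wh : X)) (uh - (wh : X)) := by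
      simp [map_add]; ring
    rw [hexp, horth _ hd, hsym (uh - (wh : X)) (u - uh), horth _ hd]
    have := hnn (uh - (wh : X))
    linarith
  -- upper bound: ‖a e‖ ≤ √γ √(a e e)
  have hup : ∀ e : X, ‖a e‖ ≤ Real.sqrt γ * Real.sqrt (a e e) := by
    intro e
    apply ContinuousLinearMap.opNorm_le_bound
    · positivity
    · intro v
      have h1 : (a e v) ^ 2 ≤ a e e * (γ * ‖v‖ ^ 2) := by
        have := hCS e v
        have h2 : a v v ≤ γ * ‖v‖ ^ 2 := by
          have := hcont v v; nlinarith
        nlinarith [hnn e]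
      have h3 : |a e v| ≤ Real.sqrt (a e e * (γ * ‖v‖ ^ 2)) := by
        rw [← Real.sqrt_sq_eq_abs]
        exact Real.sqrt_le_sqrt h1
      calc ‖a e v‖ = |a e v| := Real.norm_eq_abs _
        _ ≤ Real.sqrt (a e e * (γ * ‖v‖ ^ 2)) := h3
        _ = Real.sqrt γ * Real.sqrt (a e e) * ‖v‖ := by
            rw [Real.sqrt_mul (hnn e), Real.sqrt_mul hγ.le, Real.sqrt_sq (norm_nonneg v)]
            ring
  -- lower bound: √α √(a w w) ≤ ‖a w‖
  have hlow : ∀ w : X, Real.sqrt α * Real.sqrt (a w w) ≤ ‖a w‖ := by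
    intro w
    rcases eq_or_ne w 0 with h | h
    · simp [h]
    · have hw : 0 < ‖w‖ := norm_pos_iff.mpr h
      have h1 : a w w ≤ ‖a w‖ * ‖w‖ := by
        calc a w w ≤ |a w w| := le_abs_self _
          _ = ‖a w w‖ := (Real.norm_eq_abs _).symm
          _ ≤ ‖a w‖ * ‖w‖ := (a w).le_opNorm w
      have h2 : Real.sqrt α * ‖w‖ ≤ Real.sqrt (a w w) := by
        have : Real.sqrt (α * ‖w‖ ^ 2) ≤ Real.sqrt (a w w) := Real.sqrt_le_sqrt (hcoer w)
        rwa [Real.sqrt_mul hα.le, Real.sqrt_sq (norm_nonneg w)] at this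
      have h3 : Real.sqrt (a w w) * Real.sqrt (a w w) = a w w := Real.mul_self_sqrt (hnn w)
      have h4 : 0 ≤ Real.sqrt (a w w) := Real.sqrt_nonneg _
      rw [← mul_le_mul_iff_of_pos_right hw]
      calc Real.sqrt α * Real.sqrt (a w w) * ‖w‖
          = Real.sqrt (a w w) * (Real.sqrt α * ‖w‖) := by ring
        _ ≤ Real.sqrt (a w w) * Real.sqrt (a w w) := mul_le_mul_of_nonneg_left h2 h4
        _ = a w w := h3
        _ ≤ ‖a w‖ * ‖w‖ := h1
  -- per-wh inequality
  have hkey : ∀ wh : Xh, ‖f - a uh‖ ≤ Real.sqrt (γ / α) * ‖f - a (wh : X)‖ := by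
    intro wh
    have e1 : f - a uh = a (u - uh) := by rw [hf, ← map_sub]
    have e2 : f - a (wh : X) = a (u - (wh : X)) := by rw [hf, ← map_sub]
    rw [e1, e2]
    have s1 : ‖a (u - uh)‖
        ≤ Real.sqrt γ * Real.sqrt (a (u - uh) (u - uh)) := hup _
    have s2 : Real.sqrt (a (u - uh) (u - uh)) ≤ Real.sqrt (a (u - (wh : X)) (u - (wh : X))) :=
      Real.sqrt_le_sqrt (hmin wh)
    have s3 := hlow (u - (wh : X))
    have hsa : (0:ℝ) < Real.sqrt α := Real.sqrt_pos.mpr hα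
    have hdiv : Real.sqrt (γ / α) = Real.sqrt γ / Real.sqrt α := Real.sqrt_div hγ.le α
    rw [hdiv]
    have hsg : (0:ℝ) ≤ Real.sqrt γ := Real.sqrt_nonneg _
    calc ‖a (u - uh)‖
        ≤ Real.sqrt γ * Real.sqrt (a (u - (wh : X)) (u - (wh : X))) := by
          exact le_trans s1 (by nlinarith)
      _ ≤ Real.sqrt γ / Real.sqrt α * ‖a (u - (wh : X))‖ := by
          rw [div_mul_eq_mul_div, le_div_iff₀ hsa]
          nlinarith
  -- combine via infimum
  have hc : 0 < Real.sqrt (γ / α) := Real.sqrt_pos.mpr (div_pos hγ hα)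
  have hle : ‖f - a uh‖ / Real.sqrt (γ / α) ≤ ⨅ wh : Xh, ‖f - a (wh : X)‖ := by
    apply le_ciInf
    intro wh
    rw [div_le_iff₀ hc, mul_comm]
    exact hkey wh
  calc ‖f - a uh‖ = ‖f - a uh‖ / Real.sqrt (γ / α) * Real.sqrt (γ / α) := by
        field_simp
    _ ≤ (⨅ wh : Xh, ‖f - a (wh : X)‖) * Real.sqrt (γ / α) := by
        exact mul_le_mul_of_nonneg_right hle hc.le
    _ = Real.sqrt (γ / α) * ⨅ wh : Xh, ‖f - a (wh : X)‖ := mul_comm _ _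
end
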